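/- Let ρ : g → Diff(ℂ((z))) be an injective representation (g one of sl(2), Witt_>, Witt_<, Witt with support containing 0 and 1) with ord(ρ(L_0)) = 1, and let a_i denote the symbol of ρ(L_i). If D ∈ Diff(ℂ((z))) commutes with ρ(L_i) for all L_i ∈ g, and the symbols satisfy a_i = h^{i+n_i}(−h′)^{−n_i} for some h with h′ ≠ 0, then D is a constant (an element of ℂ ⊂ Diff⁰). -/

import Mathlib

set_option synthInstance.maxHeartbeats 1000000
set_option maxHeartbeats 1000000

noncomputable section

/-- The derivative `∂ = d/dz` on `ℂ((z))`, as a `ℂ`-linear endomorphism. -/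
def Dz : Module.End ℂ (LaurentSeries ℂ) := LaurentSeries.derivative ℂ

/-- Multiplication by a Laurent series `g`, as a `ℂ`-linear endomorphism of `ℂ((z))`. -/
def mz (g : LaurentSeries ℂ) : Module.End ℂ (LaurentSeries ℂ) where
  toFun f := g * f
  map_add' := mul_add g
  map_smul' c f := by
    show g * (c • f) = c • (g * f)
    rw [← HahnSeries.single_zero_mul_eq_smul, ← HahnSeries.single_zero_mul_eq_smul, mul_left_comm]

/-- `P` is a differential operator on `ℂ((z))` of order `≤ k`: `P = Σ_{j=0}^{k} ξ_j ∂^j`. -/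
def DiffOrderLE (P : Module.End ℂ (LaurentSeries ℂ)) (k : ℕ) : Prop :=
  ∃ ξ : ℕ → LaurentSeries ℂ, P = ∑ j ∈ Finset.range (k + 1), mz (ξ j) * Dz ^ j

/-- `P` is a differential operator on `ℂ((z))` of order `< k` (for `k = 0` this means `P = 0`). -/
def DiffOrderLT (P : Module.End ℂ (LaurentSeries ℂ)) (k : ℕ) : Prop :=
  ∃ ξ : ℕ → LaurentSeries ℂ, P = ∑ j ∈ Finset.range k, mz (ξ j) * Dz ^ j

/-- `P` is a differential operator on `ℂ((z))` of order exactly `k`. -/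
def HasOrder (P : Module.End ℂ (LaurentSeries ℂ)) (k : ℕ) : Prop :=
  DiffOrderLE P k ∧ ¬ DiffOrderLT P k

lemma mz_apply (g f : LaurentSeries ℂ) : mz g f = g * f := rfl

lemma Dz_coeff (f : LaurentSeries ℂ) (n : ℤ) :
    (Dz f).coeff n = ((n + 1 : ℤ) : ℂ) * f.coeff (n + 1) := by
  show ((LaurentSeries.hasseDeriv ℂ 1) f).coeff n = _
  rw [LaurentSeries.hasseDeriv_coeff]
  norm_num [Ring.choose_one_right, zsmul_eq_mul]

lemma mul_coeff_Icc (f g : LaurentSeries ℂ) (nn lo hi : ℤ)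
    (hf : ∀ i < lo, f.coeff i = 0) (hg : ∀ j < nn - hi, g.coeff j = 0) :
    (f * g).coeff nn = ∑ i ∈ Finset.Icc lo hi, f.coeff i * g.coeff (nn - i) := by
  classical
  rw [HahnSeries.coeff_mul]
  have hemb : Function.Injective (fun i : ℤ => (i, nn - i)) := by
    intro a b hab; simpa using congrArg Prod.fst hab
  rw [show (∑ i ∈ Finset.Icc lo hi, f.coeff i * g.coeff (nn - i))
      = ∑ p ∈ (Finset.Icc lo hi).map ⟨fun i => (i, nn - i), hemb⟩,
          f.coeff p.1 * g.coeff p.2 by rw [Finset.sum_map]; rfl]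
  apply Finset.sum_subset
  · intro ij hij
    rw [Finset.mem_addAntidiagonal] at hij
    obtain ⟨h1, h2, h3⟩ := hij
    simp only [Finset.mem_map, Finset.mem_Icc, Function.Embedding.coeFn_mk]
    refine ⟨ij.1, ⟨?_, ?_⟩, ?_⟩
    · by_contra hlt
      exact h1 (hf _ (lt_of_not_ge hlt))
    · have : ¬ (ij.2 < nn - hi) := fun hc => h2 (hg _ hc)
      omega
    · have : ij.2 = nn - ij.1 := by omega
      rw [← this]
  · intro p hp hnp
    simp only [Finset.mem_map, Finset.mem_Icc, Function.Embedding.coeFn_mk] at hp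
    obtain ⟨i, _, rfl⟩ := hp
    by_cases h1 : f.coeff i = 0
    · rw [h1, zero_mul]
    · by_cases h2 : g.coeff (nn - i) = 0
      · rw [h2, mul_zero]
      · refine absurd ?_ hnp
        rw [Finset.mem_addAntidiagonal]
        exact ⟨h1, h2, by ring⟩

theorem Dz_mul (f g : LaurentSeries ℂ) : Dz (f * g) = Dz f * g + f * Dz g := by
  ext nn
  set lo : ℤ := min f.order (Dz f).order - 1 with hlo
  set lg : ℤ := min g.order (Dz g).order - 1 with hlg
  set hi : ℤ := nn + 1 - lg with hhi
  have hford : ∀ i < lo, f.coeff i = 0 := fun i hi =>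
    HahnSeries.coeff_eq_zero_of_lt_order (by omega)
  have hdford : ∀ i < lo - 1, (Dz f).coeff i = 0 := fun i hi =>
    HahnSeries.coeff_eq_zero_of_lt_order (by omega)
  have hgord : ∀ j < lg, g.coeff j = 0 := fun j hj =>
    HahnSeries.coeff_eq_zero_of_lt_order (by omega)
  have hdgord : ∀ j < lg - 1, (Dz g).coeff j = 0 := fun j hj =>
    HahnSeries.coeff_eq_zero_of_lt_order (by omega)
  rw [HahnSeries.coeff_add, Dz_coeff]
  rw [mul_coeff_Icc f g (nn+1) lo hi hford (fun j hj => hgord j (by omega))]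
  rw [mul_coeff_Icc (Dz f) g nn (lo - 1) (hi - 1) hdford (fun j hj => hgord j (by omega))]
  rw [mul_coeff_Icc f (Dz g) nn lo hi hford (fun j hj => hdgord j (by omega))]
  have hmap : Finset.Icc (lo - 1) (hi - 1) =
      (Finset.Icc lo hi).map (addRightEmbedding (-1)) := by
    rw [Finset.map_add_right_Icc]; congr 1 <;> ring
  rw [hmap, Finset.sum_map, Finset.mul_sum, ← Finset.sum_add_distrib]
  apply Finset.sum_congr rfl
  intro i _
  simp only [addRightEmbedding_apply]
  rw [Dz_coeff, Dz_coeff]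
  have e1 : i + -1 + 1 = i := by ring
  have e2 : nn - (i + -1) = nn + 1 - i := by ring
  have e3 : nn - i + 1 = nn + 1 - i := by ring
  rw [e1, e2, e3]
  push_cast
  ring

namespace DO

abbrev K := LaurentSeries ℂ

instance : SMulCommClass ℂ K K :=
  ⟨fun c a b => by
    rw [smul_eq_mul, smul_eq_mul, ← HahnSeries.single_zero_mul_eq_smul,
      ← HahnSeries.single_zero_mul_eq_smul, mul_left_comm]⟩

instance : IsScalarTower ℂ K K :=
  ⟨fun c a b => by
    rw [smul_eq_mul, smul_eq_mul, ← HahnSeries.single_zero_mul_eq_smul,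
      ← HahnSeries.single_zero_mul_eq_smul, mul_assoc]⟩

lemma mz_mul (a b : K) : mz (a * b) = mz a * mz b := by
  ext f; simp [mz_apply, Module.End.mul_apply, mul_assoc]

lemma mz_zero : mz 0 = 0 := by ext f; simp [mz_apply]

lemma mz_one : mz 1 = 1 := by ext f; simp [mz_apply]

lemma mz_add (a b : K) : mz (a + b) = mz a + mz b := by
  ext f; simp [mz_apply, add_mul]

lemma mz_sub (a b : K) : mz (a - b) = mz a - mz b := by
  ext f; simp [mz_apply, sub_mul]

lemma mz_smul (c : ℂ) (a : K) : mz (c • a) = c • mz a := by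
  refine LinearMap.ext fun f => ?_
  show (c • a) * f = c • (a * f)
  rw [← HahnSeries.single_zero_mul_eq_smul, ← HahnSeries.single_zero_mul_eq_smul, mul_assoc]

lemma mz_eq_zero {a : K} (h : mz a = 0) : a = 0 := by
  have := congrArg (fun P => P 1) h
  simpa [mz_apply] using this

lemma lie_def' (P Q : Module.End ℂ K) : ⁅P, Q⁆ = P * Q - Q * P := rfl

lemma lie_mz (a b : K) : ⁅mz a, mz b⁆ = 0 := by
  rw [lie_def', ← mz_mul, ← mz_mul, mul_comm]
  exact sub_self (mz (b * a))

lemma Dz_mz (g : K) : Dz * mz g = mz g * Dz + mz (Dz g) := by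
  ext f
  simp only [Module.End.mul_apply, LinearMap.add_apply, mz_apply]
  rw [Dz_mul]; ring

lemma lt_zero {P : Module.End ℂ K} (h : DiffOrderLT P 0) : P = 0 := by
  obtain ⟨ξ, rfl⟩ := h; simp

lemma zero_lt (m : ℕ) : DiffOrderLT (0 : Module.End ℂ K) m :=
  ⟨0, by simp [mz_zero]⟩

lemma single_lt (g : K) (j m : ℕ) (hjm : j < m) : DiffOrderLT (mz g * Dz ^ j) m := by
  classical
  refine ⟨fun i => if i = j then g else 0, Eq.symm ?_⟩
  rw [Finset.sum_eq_single_of_mem j (Finset.mem_range.mpr hjm)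
    (fun b _ hb => by simp only [if_neg hb, mz_zero, zero_mul])]
  simp

lemma lt_mono {P : Module.End ℂ K} {m m' : ℕ} (h : DiffOrderLT P m) (hmm : m ≤ m') :
    DiffOrderLT P m' := by
  classical
  obtain ⟨ξ, rfl⟩ := h
  refine ⟨fun i => if i < m then ξ i else 0, ?_⟩
  rw [(Finset.sum_subset (Finset.range_subset_range.mpr hmm) (fun i _ hi => ?_)).symm]
  · exact Finset.sum_congr rfl fun i hi => by
      simp only [if_pos (Finset.mem_range.mp hi)]
  · have : ¬ i < m := by simpa using hi
    simp only [if_neg this, mz_zero, zero_mul]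

lemma lt_add {P Q : Module.End ℂ K} {m : ℕ} (hP : DiffOrderLT P m) (hQ : DiffOrderLT Q m) :
    DiffOrderLT (P + Q) m := by
  obtain ⟨ξ, rfl⟩ := hP; obtain ⟨η, rfl⟩ := hQ
  refine ⟨ξ + η, ?_⟩
  rw [← Finset.sum_add_distrib]
  exact Finset.sum_congr rfl fun i _ => by rw [Pi.add_apply, mz_add, add_mul]

lemma lt_smul {P : Module.End ℂ K} {m : ℕ} (c : ℂ) (h : DiffOrderLT P m) :
    DiffOrderLT (c • P) m := by
  obtain ⟨ξ, rfl⟩ := h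
  refine ⟨fun i => c • ξ i, ?_⟩
  rw [Finset.smul_sum]
  exact Finset.sum_congr rfl fun i _ => by rw [mz_smul, smul_mul_assoc]

lemma lt_neg {P : Module.End ℂ K} {m : ℕ} (hP : DiffOrderLT P m) : DiffOrderLT (-P) m := by
  have := lt_smul (-1 : ℂ) hP
  have e : (-1 : ℂ) • P = -P := by module
  rwa [e] at this

lemma lt_sub {P Q : Module.End ℂ K} {m : ℕ} (hP : DiffOrderLT P m) (hQ : DiffOrderLT Q m) :
    DiffOrderLT (P - Q) m := by
  have e : P - Q = P + -Q := sub_eq_add_neg P Q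
  rw [e]; exact lt_add hP (lt_neg hQ)

lemma lt_sum {α : Type*} {s : Finset α} {f : α → Module.End ℂ K} {m : ℕ}
    (h : ∀ a ∈ s, DiffOrderLT (f a) m) : DiffOrderLT (∑ a ∈ s, f a) m :=
  Finset.sum_induction f (fun P => DiffOrderLT P m) (fun _ _ => lt_add) (zero_lt m) h

lemma lt_mz_mul {P : Module.End ℂ K} {m : ℕ} (g : K) (h : DiffOrderLT P m) :
    DiffOrderLT (mz g * P) m := by
  obtain ⟨ξ, rfl⟩ := h
  refine ⟨fun i => g * ξ i, ?_⟩
  rw [Finset.mul_sum]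
  exact Finset.sum_congr rfl fun i _ => by rw [← mul_assoc, ← mz_mul]

lemma lt_mul_Dzpow {P : Module.End ℂ K} {m : ℕ} (nn : ℕ) (h : DiffOrderLT P m) :
    DiffOrderLT (P * Dz ^ nn) (m + nn) := by
  obtain ⟨ξ, rfl⟩ := h
  rw [Finset.sum_mul]
  apply lt_sum
  intro i hi
  rw [mul_assoc, ← pow_add]
  exact single_lt _ _ _ (by have := Finset.mem_range.mp hi; omega)

lemma lt_Dz_mul {P : Module.End ℂ K} {m : ℕ} (h : DiffOrderLT P m) :
    DiffOrderLT (Dz * P) (m + 1) := by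
  obtain ⟨ξ, rfl⟩ := h
  rw [Finset.mul_sum]
  apply lt_sum
  intro i hi
  have hi' := Finset.mem_range.mp hi
  rw [← mul_assoc, Dz_mz, add_mul, mul_assoc, ← pow_succ']
  exact lt_add (single_lt _ _ _ (by omega)) (single_lt _ _ _ (by omega))

lemma Dz_pow_mz (m : ℕ) (g : K) : ∃ Er : Module.End ℂ K, DiffOrderLT Er m ∧
    Dz ^ (m + 1) * mz g
      = mz g * Dz ^ (m + 1) + mz (((m + 1 : ℕ) : ℂ) • Dz g) * Dz ^ m + Er := by
  induction m with
  | zero =>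
    refine ⟨0, zero_lt 0, ?_⟩
    rw [pow_one, Dz_mz]
    norm_num
  | succ m ih =>
    obtain ⟨Er, hEr, hco⟩ := ih
    refine ⟨mz (((m + 1 : ℕ) : ℂ) • Dz (Dz g)) * Dz ^ m + Dz * Er,
      lt_add (single_lt _ _ _ (Nat.lt_succ_self m)) (lt_Dz_mul hEr), ?_⟩
    have e1 : Dz ^ (m + 1 + 1) * mz g = Dz * (Dz ^ (m + 1) * mz g) := by
      rw [← mul_assoc, ← pow_succ']
    rw [e1, hco, mul_add, mul_add, ← mul_assoc Dz (mz g) _, Dz_mz,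
      ← mul_assoc Dz (mz (((m + 1 : ℕ) : ℂ) • Dz g)) _, Dz_mz]
    simp only [map_smul]
    rw [add_mul, add_mul, mul_assoc (mz g) Dz, ← pow_succ',
      mul_assoc (mz (((m + 1 : ℕ) : ℂ) • Dz g)) Dz, ← pow_succ']
    have ecomb : mz (Dz g) * Dz ^ (m + 1) + mz (((m + 1 : ℕ) : ℂ) • Dz g) * Dz ^ (m + 1)
        = mz (((m + 1 + 1 : ℕ) : ℂ) • Dz g) * Dz ^ (m + 1) := by
      rw [← add_mul, ← mz_add]
      congr 2
      push_cast
      module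
    rw [← ecomb]
    abel
  

lemma mul_normal (m nn : ℕ) (f g : K) : ∃ Er : Module.End ℂ K, DiffOrderLT Er (m + nn - 1) ∧
    (mz f * Dz ^ m) * (mz g * Dz ^ nn)
      = mz (f * g) * Dz ^ (m + nn) + mz ((m : ℂ) • (f * Dz g)) * Dz ^ (m + nn - 1) + Er := by
  cases m with
  | zero =>
    refine ⟨0, zero_lt _, ?_⟩
    have ez : ((0:ℕ):ℂ) • (f * Dz g) = 0 := by
      rw [Nat.cast_zero]; exact zero_smul ℂ (f * Dz g)
    rw [pow_zero, mul_one, ez, mz_zero, zero_mul, add_zero, add_zero,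
      Nat.zero_add, ← mul_assoc, ← mz_mul]
  | succ m =>
    obtain ⟨Er, hEr, hco⟩ := Dz_pow_mz m g
    have hlt : DiffOrderLT (mz f * Er * Dz ^ nn) (m + 1 + nn - 1) := by
      have := lt_mul_Dzpow nn (lt_mz_mul f hEr)
      exact lt_mono this (by omega)
    refine ⟨mz f * Er * Dz ^ nn, hlt, ?_⟩
    · have e1 : (mz f * Dz ^ (m+1)) * (mz g * Dz ^ nn) = mz f * (Dz ^ (m+1) * mz g) * Dz ^ nn := by
        rw [mul_assoc, mul_assoc, mul_assoc]
      rw [e1, hco]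
      rw [mul_add, mul_add, add_mul, add_mul]
      rw [← mul_assoc (mz f) (mz g), ← mz_mul]
      rw [← mul_assoc (mz f) (mz (((m + 1 : ℕ) : ℂ) • Dz g)), ← mz_mul]
      rw [mul_assoc (mz (f * g)), ← pow_add]
      rw [mul_assoc (mz (f * ((m + 1 : ℕ) : ℂ) • Dz g)), ← pow_add]
      have e2 : f * ((m + 1 : ℕ) : ℂ) • Dz g = ((m + 1 : ℕ) : ℂ) • (f * Dz g) := by
        rw [mul_smul_comm]
      have e3 : m + nn = m + 1 + nn - 1 := by omega
      rw [e2, e3]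

lemma lie_normal (m nn : ℕ) (f g : K) : ∃ Er : Module.End ℂ K, DiffOrderLT Er (m + nn - 1) ∧
    ⁅mz f * Dz ^ m, mz g * Dz ^ nn⁆
      = mz ((m : ℂ) • (f * Dz g) - (nn : ℂ) • (g * Dz f)) * Dz ^ (m + nn - 1) + Er := by
  obtain ⟨E1, h1, e1⟩ := mul_normal m nn f g
  obtain ⟨E2, h2, e2⟩ := mul_normal nn m g f
  rw [Nat.add_comm nn m] at h2 e2
  refine ⟨E1 - E2, lt_sub h1 h2, ?_⟩
  rw [lie_def', e1, e2, mul_comm g f]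
  have esplit : mz ((m : ℂ) • (f * Dz g) - (nn : ℂ) • (g * Dz f)) * Dz ^ (m + nn - 1)
      = mz ((m : ℂ) • (f * Dz g)) * Dz ^ (m + nn - 1)
        - mz ((nn : ℂ) • (g * Dz f)) * Dz ^ (m + nn - 1) := by
    rw [mz_sub]
    exact sub_mul (mz ((m : ℂ) • (f * Dz g))) (mz ((nn : ℂ) • (g * Dz f))) (Dz ^ (m + nn - 1))
  rw [esplit]
  abel

lemma lie_lt {P Q : Module.End ℂ K} {p q : ℕ} (hP : DiffOrderLE P p) (hQ : DiffOrderLE Q q) :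
    DiffOrderLT ⁅P, Q⁆ (p + q) := by
  obtain ⟨ξ, rfl⟩ := hP
  obtain ⟨η, rfl⟩ := hQ
  have expand : ⁅∑ i ∈ Finset.range (p+1), mz (ξ i) * Dz ^ i,
      ∑ j ∈ Finset.range (q+1), mz (η j) * Dz ^ j⁆
      = ∑ i ∈ Finset.range (p+1), ∑ j ∈ Finset.range (q+1),
          ⁅mz (ξ i) * Dz ^ i, mz (η j) * Dz ^ j⁆ := by
    simp only [lie_def', Finset.sum_mul, Finset.mul_sum]
    rw [show (∑ x ∈ Finset.range (q+1), ∑ i ∈ Finset.range (p+1),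
          mz (ξ i) * Dz ^ i * (mz (η x) * Dz ^ x))
        = ∑ i ∈ Finset.range (p+1), ∑ x ∈ Finset.range (q+1),
          mz (ξ i) * Dz ^ i * (mz (η x) * Dz ^ x) from Finset.sum_comm]
    have s1 : (∑ i ∈ Finset.range (p+1), ∑ j ∈ Finset.range (q+1),
          (mz (ξ i) * Dz ^ i * (mz (η j) * Dz ^ j) - mz (η j) * Dz ^ j * (mz (ξ i) * Dz ^ i)))
        = ∑ i ∈ Finset.range (p+1),
            ((∑ j ∈ Finset.range (q+1), mz (ξ i) * Dz ^ i * (mz (η j) * Dz ^ j))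
              - ∑ j ∈ Finset.range (q+1), mz (η j) * Dz ^ j * (mz (ξ i) * Dz ^ i)) :=
      Finset.sum_congr rfl (fun i _ => Finset.sum_sub_distrib (G := Module.End ℂ K) _ _)
    have s2 : (∑ i ∈ Finset.range (p+1),
            ((∑ j ∈ Finset.range (q+1), mz (ξ i) * Dz ^ i * (mz (η j) * Dz ^ j))
              - ∑ j ∈ Finset.range (q+1), mz (η j) * Dz ^ j * (mz (ξ i) * Dz ^ i)))
        = (∑ i ∈ Finset.range (p+1), ∑ j ∈ Finset.range (q+1),
              mz (ξ i) * Dz ^ i * (mz (η j) * Dz ^ j))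
          - ∑ i ∈ Finset.range (p+1), ∑ j ∈ Finset.range (q+1),
              mz (η j) * Dz ^ j * (mz (ξ i) * Dz ^ i) :=
      Finset.sum_sub_distrib (G := Module.End ℂ K) _ _
    exact (s1.trans s2).symm
  rw [expand]
  apply lt_sum; intro i hi; apply lt_sum; intro j hj
  have hi' := Finset.mem_range.mp hi
  have hj' := Finset.mem_range.mp hj
  obtain ⟨Er, hEr, he⟩ := lie_normal i j (ξ i) (η j)
  rw [he]
  rcases Nat.eq_zero_or_pos (i + j) with hij | hij
  · have hi0 : i = 0 := by omega
    have hj0 : j = 0 := by omega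
    subst hi0; subst hj0
    apply lt_add ?_ (lt_mono hEr (by omega))
    have hz : ∀ x : K, ((0:ℕ):ℂ) • x = (0 : K) := fun x => by
      rw [Nat.cast_zero]; exact zero_smul ℂ x
    have : ((0:ℕ) : ℂ) • (ξ 0 * Dz (η 0)) - ((0:ℕ) : ℂ) • (η 0 * Dz (ξ 0)) = 0 := by
      rw [hz, hz, sub_zero]
    rw [this, mz_zero, zero_mul]
    exact zero_lt _
  · exact lt_add (single_lt _ _ _ (by omega)) (lt_mono hEr (by omega))

def cf (N : ℕ) : ℕ → ℂ
  | 0 => 1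
  | (j+1) => ((N : ℂ) - (j : ℂ)) * cf N j

lemma cf_ne {N j : ℕ} (hj : j ≤ N) : cf N j ≠ 0 := by
  induction j with
  | zero => simp [cf]
  | succ j ih =>
    have h1 : ((N : ℂ) - (j : ℂ)) ≠ 0 := by
      have : (j : ℂ) ≠ (N : ℂ) := by
        exact_mod_cast Nat.ne_of_lt (by omega)
      intro hc
      exact this (by linear_combination -hc)
    exact mul_ne_zero h1 (ih (by omega))

lemma cf_zero {N j : ℕ} (hj : N < j) : cf N j = 0 := by
  induction j with
  | zero => omega
  | succ j ih =>
    rcases Nat.lt_or_ge N j with hc | hc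
    · rw [cf, ih hc, mul_zero]
    · have hNj : N = j := by omega
      rw [cf, hNj, sub_self, zero_mul]

lemma Dz_single (t : ℤ) (c : ℂ) :
    Dz (HahnSeries.single t c) = HahnSeries.single (t - 1) ((t : ℂ) * c) := by
  show (LaurentSeries.hasseDeriv ℂ 1) (HahnSeries.single t c) = _
  rw [LaurentSeries.hasseDeriv_single]
  have e : Ring.choose t 1 • c = (t : ℂ) * c := by
    rw [Ring.choose_one_right]; exact zsmul_eq_mul c t
  rw [e]
  norm_num

lemma Dz_pow_single (N : ℕ) (j : ℕ) :
    (Dz ^ j) (HahnSeries.single (N : ℤ) (1:ℂ)) = HahnSeries.single ((N : ℤ) - j) (cf N j) := by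
  induction j with
  | zero => simp [cf]
  | succ j ih =>
    rw [pow_succ', Module.End.mul_apply, ih, Dz_single]
    congr 1
    · push_cast; ring
    · rw [cf]; push_cast; ring

lemma opzero {m : ℕ} {ξ : ℕ → K}
    (H : ∑ j ∈ Finset.range m, mz (ξ j) * Dz ^ j = 0) : ∀ j < m, ξ j = 0 := by
  intro j0
  induction j0 using Nat.strong_induction_on with
  | _ j0 ih =>
    intro hj0m
    have happ := congrArg (fun P : Module.End ℂ K => P (HahnSeries.single (j0 : ℤ) (1:ℂ))) H
    simp only [LinearMap.sum_apply, LinearMap.zero_apply, Module.End.mul_apply] at happ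
    have hterm : ∀ j ∈ Finset.range m, j ≠ j0 →
        mz (ξ j) ((Dz ^ j) (HahnSeries.single (j0 : ℤ) (1:ℂ))) = 0 := by
      intro j hj hne
      rcases Nat.lt_or_ge j j0 with hlt | hge
      · rw [ih j hlt (by omega), mz_zero, LinearMap.zero_apply]
      · have : j0 < j := by omega
        rw [Dz_pow_single, cf_zero this, HahnSeries.single_eq_zero, mz_apply, mul_zero]
    rw [Finset.sum_eq_single_of_mem j0 (Finset.mem_range.mpr hj0m) hterm] at happ
    rw [Dz_pow_single, mz_apply, sub_self, mul_comm,
      HahnSeries.single_zero_mul_eq_smul] at happ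
    have := congrArg (fun x : K => (cf j0 j0)⁻¹ • x) happ
    simpa [smul_smul, inv_mul_cancel₀ (cf_ne (le_refl j0))] using this

lemma extract {a : K} {m : ℕ} {Er : Module.End ℂ K} (hE : DiffOrderLT Er m)
    (hsum : mz a * Dz ^ m + Er = 0) : a = 0 := by
  classical
  obtain ⟨ξ, rfl⟩ := hE
  have H : ∑ j ∈ Finset.range (m+1), mz ((fun j => if j = m then a else ξ j) j) * Dz ^ j = 0 := by
    rw [Finset.sum_range_succ]
    have e1 : ∑ j ∈ Finset.range m, mz ((fun j => if j = m then a else ξ j) j) * Dz ^ j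
        = ∑ j ∈ Finset.range m, mz (ξ j) * Dz ^ j := by
      apply Finset.sum_congr rfl
      intro j hj
      have : j ≠ m := by have := Finset.mem_range.mp hj; omega
      simp only [if_neg this]
    rw [e1]
    simp only [if_pos rfl]
    rw [add_comm]
    exact hsum
  have := opzero H m (Nat.lt_succ_self m)
  simpa using this


lemma csmul (m : ℕ) (x : K) : (m : ℂ) • x = (m : K) * x :=
  (Nat.cast_smul_eq_nsmul ℂ m x).trans (nsmul_eq_mul m x)

lemma Dz_one : Dz (1 : K) = 0 := by
  have hh := Dz_mul (1 : K) 1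
  rw [one_mul, mul_one, one_mul] at hh
  exact (add_eq_left.mp hh.symm)

lemma Dz_pow_mul (u : K) (m : ℕ) : Dz (u ^ m) * u = (m : K) * (u ^ m * Dz u) := by
  induction m with
  | zero => rw [pow_zero, Dz_one, zero_mul, Nat.cast_zero, zero_mul]
  | succ m ih =>
    rw [pow_succ, Dz_mul]
    push_cast
    push_cast at ih
    linear_combination u * ih

lemma Dz_pow_succ (u : K) (m : ℕ) : Dz (u ^ (m + 1)) = ((m + 1 : ℕ) : K) * (u ^ m * Dz u) := by
  induction m with
  | zero => rw [pow_one, pow_zero, Nat.cast_one, one_mul, one_mul]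
  | succ m ih =>
    rw [pow_succ, Dz_mul, ih]
    push_cast
    ring

lemma Dz_ker {f : K} (hf : Dz f = 0) : ∃ c : ℂ, f = HahnSeries.single 0 c := by
  refine ⟨f.coeff 0, ?_⟩
  ext nn
  by_cases hn : nn = 0
  · rw [hn, HahnSeries.coeff_single_same]
  · rw [HahnSeries.coeff_single_of_ne hn]
    have h1 := congrArg (fun x : K => x.coeff (nn - 1)) hf
    simp only [HahnSeries.coeff_zero] at h1
    rw [Dz_coeff] at h1
    have e1 : nn - 1 + 1 = nn := by ring
    rw [e1] at h1
    have h2 : ((nn : ℤ) : ℂ) ≠ 0 := by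
      simp only [ne_eq, Int.cast_eq_zero]
      exact hn
    exact (mul_eq_zero.mp h1).resolve_left h2

lemma mz_single0 (c : ℂ) : mz (HahnSeries.single 0 c) = c • (1 : Module.End ℂ K) := by
  refine LinearMap.ext fun f => ?_
  show HahnSeries.single 0 c * f = (c • (1 : Module.End ℂ K)) f
  rw [LinearMap.smul_apply, Module.End.one_apply]
  exact HahnSeries.single_zero_mul_eq_smul

lemma lie_add' (x y z : Module.End ℂ K) : ⁅x, y + z⁆ = ⁅x, y⁆ + ⁅x, z⁆ := by
  simp only [lie_def', mul_add, add_mul]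
  abel

lemma add_lie' (x y z : Module.End ℂ K) : ⁅x + y, z⁆ = ⁅x, z⁆ + ⁅y, z⁆ := by
  simp only [lie_def', mul_add, add_mul]
  abel

lemma lie_zero' (x : Module.End ℂ K) : ⁅x, (0 : Module.End ℂ K)⁆ = 0 := by
  simp only [lie_def', mul_zero, zero_mul]
  exact sub_self (0 : Module.End ℂ K)

instance : CharZero K := by
  constructor
  intro a b hab
  have h2 : (HahnSeries.C ((a : ℕ) : ℂ) : K) = HahnSeries.C ((b : ℕ) : ℂ) := by
    rw [map_natCast, map_natCast]
    exact_mod_cast hab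
  have h3 := HahnSeries.C_injective h2
  exact_mod_cast h3


end DO

open DO

/-- Let `ρ : g → Diff(ℂ((z)))` be an injective representation, where `g` has support `S ∋ 0, 1`
and bracket `[L i, L j] = (i−j) L (i+j)`, with `ord(ρ(L 0)) = 1`, and whose symbols satisfy
`a_i = h^{i+n_i} (−h′)^{−n_i}` for some `h` with `h′ ≠ 0`.  If `D ∈ Diff(ℂ((z)))` commutes with
every `ρ(L i)`, then `D` is a constant (an element of `ℂ ⊂ Diff⁰`). -/
theorem commutant_is_constant
    (S : Set ℤ) (h0S : (0 : ℤ) ∈ S) (h1S : (1 : ℤ) ∈ S)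
    (ρ : ℤ → Module.End ℂ (LaurentSeries ℂ))
    (n : ℤ → ℕ) (hn0 : n 0 = 1)
    (h : LaurentSeries ℂ) (hder : Dz h ≠ 0)
    (horder : ∀ i ∈ S, HasOrder (ρ i) (n i))
    (hsym : ∀ i ∈ S, ∃ R : Module.End ℂ (LaurentSeries ℂ), DiffOrderLT R (n i) ∧
      ρ i = mz (h ^ (i + (n i : ℤ)) * (-(Dz h)) ^ (-(n i : ℤ))) * Dz ^ (n i) + R)
    (hrel : ∀ i j : ℤ, i ∈ S → j ∈ S → i ≠ j → i + j ∈ S →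
      ⁅ρ i, ρ j⁆ = (((i : ℂ) - (j : ℂ))) • ρ (i + j))
    (hinj : ∀ c : ℤ →₀ ℂ, (∀ i ∈ c.support, i ∈ S) →
      (c.sum fun i a => a • ρ i) = 0 → c = 0)
    (D : Module.End ℂ (LaurentSeries ℂ))
    (hDdiff : ∃ k : ℕ, DiffOrderLE D k)
    (hcomm : ∀ i ∈ S, ⁅D, ρ i⁆ = 0) :
    ∃ κ : ℂ, D = κ • (1 : Module.End ℂ (LaurentSeries ℂ)) := by
  classical
  -- setup
  set w : LaurentSeries ℂ := -(Dz h) with hwdef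
  have hwne : w ≠ 0 := neg_ne_zero.mpr hder
  have hhne : h ≠ 0 := fun hc => hder (by rw [hc, map_zero])
  obtain ⟨R0, hR0lt, hρ0⟩ := hsym 0 h0S
  rw [hn0] at hR0lt hρ0
  set a0 : LaurentSeries ℂ := h * w⁻¹ with ha0def
  have ea0 : h ^ ((0:ℤ) + ((1:ℕ) : ℤ)) * (-(Dz h)) ^ (-((1:ℕ) : ℤ)) = a0 := by
    rw [ha0def, hwdef]
    norm_num
  rw [ea0] at hρ0
  have ha0ne : a0 ≠ 0 := mul_ne_zero hhne (inv_ne_zero hwne)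
  have fa0 : a0 * w = h := by
    rw [ha0def, mul_assoc, inv_mul_cancel₀ hwne, mul_one]
  set n1 : ℕ := n 1 with hn1def
  obtain ⟨R1, hR1lt, hρ1⟩ := hsym 1 h1S
  rw [← hn1def] at hR1lt hρ1
  set a1 : LaurentSeries ℂ := h ^ (n1 + 1) * (w ^ n1)⁻¹ with ha1def
  have ea1 : h ^ ((1:ℤ) + (n1 : ℤ)) * (-(Dz h)) ^ (-(n1 : ℤ)) = a1 := by
    rw [ha1def, hwdef]
    rw [show ((1:ℤ) + (n1 : ℤ)) = ((n1 + 1 : ℕ) : ℤ) by push_cast; ring]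
    rw [zpow_natCast, zpow_neg, zpow_natCast]
  rw [ea1] at hρ1
  have ha1ne : a1 ≠ 0 := mul_ne_zero (pow_ne_zero _ hhne) (inv_ne_zero (pow_ne_zero _ hwne))
  have fa1 : a1 * w ^ n1 = h ^ n1 * h := by
    rw [ha1def, mul_assoc, inv_mul_cancel₀ (pow_ne_zero _ hwne), mul_one, pow_succ]
  -- derivative identities
  have dfa0 : Dz a0 * w + a0 * Dz w = Dz h := by
    have hc := congrArg (fun x : LaurentSeries ℂ => Dz x) fa0
    rw [Dz_mul] at hc
    exact hc
  have dfa1 : Dz a1 * w ^ n1 + a1 * Dz (w ^ n1) = ((n1 + 1 : ℕ) : LaurentSeries ℂ) * (h ^ n1 * Dz h) := by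
    have hc := congrArg (fun x : LaurentSeries ℂ => Dz x) fa1
    rw [Dz_mul, ← pow_succ, Dz_pow_succ] at hc
    exact hc
  have dp : Dz (w ^ n1) * w = (n1 : LaurentSeries ℂ) * (w ^ n1 * Dz w) := Dz_pow_mul w n1
  -- the key induction on the order of D
  have key : ∀ k : ℕ, ∀ E : Module.End ℂ (LaurentSeries ℂ), DiffOrderLE E k →
      ⁅E, ρ 0⁆ = 0 → ⁅E, ρ 1⁆ = 0 → ∃ κ : ℂ, E = κ • 1 := by
    intro k
    induction k with
    | zero =>
      intro E hE hc0 _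
      obtain ⟨ξ, hDe⟩ := hE
      have hDe' : E = 0 + mz (ξ 0) * Dz ^ 0 := by
        rw [hDe, Finset.sum_range_succ, Finset.sum_range_zero]
      obtain ⟨Er, hErlt, heq⟩ := lie_normal 0 1 (ξ 0) a0
      rw [show (0 + 1 - 1 : ℕ) = 0 from rfl] at hErlt heq
      rw [hρ0] at hc0
      have expand : ⁅E, mz a0 * Dz ^ 1 + R0⁆
          = mz (((0:ℕ) : ℂ) • (ξ 0 * Dz a0) - ((1:ℕ) : ℂ) • (a0 * Dz (ξ 0))) * Dz ^ 0
            + (Er + ⁅mz (ξ 0) * Dz ^ 0, R0⁆) := by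
        rw [hDe', zero_add, lie_add', heq]
        abel
      rw [expand] at hc0
      have hB : DiffOrderLT ⁅mz (ξ 0) * Dz ^ 0, R0⁆ (0 : ℕ) := by
        have := lie_lt (p := 0) (q := 0) (single_lt (ξ 0) 0 1 Nat.one_pos) hR0lt
        simpa using this
      have hcz := extract (lt_add hErlt hB) hc0
      rw [csmul, csmul] at hcz
      push_cast at hcz
      have hz : a0 * Dz (ξ 0) = 0 := by linear_combination -hcz
      have hdz : Dz (ξ 0) = 0 := (mul_eq_zero.mp hz).resolve_left ha0ne
      obtain ⟨c, hc⟩ := Dz_ker hdz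
      exact ⟨c, by rw [hDe', zero_add, pow_zero, mul_one, hc, mz_single0]⟩
    | succ k ih =>
      intro E hE hc0 hc1
      obtain ⟨ξ, hDe⟩ := hE
      by_cases hξ : ξ (k + 1) = 0
      · refine ih E ⟨ξ, ?_⟩ hc0 hc1
        rw [hDe, Finset.sum_range_succ, hξ, mz_zero, zero_mul, add_zero]
      · exfalso
        -- main computation
        have hmain : ∀ (a : LaurentSeries ℂ) (p : ℕ) (R : Module.End ℂ (LaurentSeries ℂ)),
            DiffOrderLT R p → ⁅E, mz a * Dz ^ p + R⁆ = 0 →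
            ((k + 1 : ℕ) : LaurentSeries ℂ) * (ξ (k+1) * Dz a)
              - ((p : ℕ) : LaurentSeries ℂ) * (a * Dz (ξ (k+1))) = 0 := by
          intro a p R hRlt hbr
          have hDsplit : E = (∑ j ∈ Finset.range (k+1), mz (ξ j) * Dz ^ j)
              + mz (ξ (k+1)) * Dz ^ (k+1) := by
            rw [hDe, Finset.sum_range_succ]
          obtain ⟨Er, hErlt, heq⟩ := lie_normal (k+1) p (ξ (k+1)) a
          have hkp : k + 1 + p - 1 = k + p := by omega
          rw [hkp] at hErlt heq
          have hρLE : DiffOrderLE (mz a * Dz ^ p + R) p :=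
            lt_add (single_lt a p (p+1) (Nat.lt_succ_self p)) (lt_mono hRlt (Nat.le_succ p))
          have h1 : DiffOrderLT ⁅∑ j ∈ Finset.range (k+1), mz (ξ j) * Dz ^ j,
              mz a * Dz ^ p + R⁆ (k + p) := lie_lt ⟨ξ, rfl⟩ hρLE
          have h2 : DiffOrderLT ⁅mz (ξ (k+1)) * Dz ^ (k+1), R⁆ (k + p) := by
            cases p with
            | zero =>
              rw [lt_zero hRlt, lie_zero']
              exact zero_lt _
            | succ p' =>
              have := lie_lt (p := k+1) (q := p')
                (single_lt (ξ (k+1)) (k+1) (k+2) (Nat.lt_succ_self (k+1))) hRlt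
              exact lt_mono this (by omega)
          have expand : ⁅E, mz a * Dz ^ p + R⁆
              = mz (((k+1:ℕ) : ℂ) • (ξ (k+1) * Dz a) - ((p:ℕ) : ℂ) • (a * Dz (ξ (k+1)))) * Dz ^ (k+p)
                + (Er + (⁅∑ j ∈ Finset.range (k+1), mz (ξ j) * Dz ^ j, mz a * Dz ^ p + R⁆
                    + ⁅mz (ξ (k+1)) * Dz ^ (k+1), R⁆)) := by
            rw [hDsplit, add_lie', lie_add' (mz (ξ (k+1)) * Dz ^ (k+1)), heq]
            abel
          rw [expand] at hbr
          have hcz := extract (lt_add hErlt (lt_add h1 h2)) hbr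
          rw [csmul, csmul] at hcz
          exact hcz
        have e0 := hmain a0 1 R0 hR0lt (by rw [← hρ0]; exact hc0)
        have e1 := hmain a1 n1 R1 hR1lt (by rw [← hρ1]; exact hc1)
        push_cast at e0 e1 dfa1
        set ξk := ξ (k+1) with hξkdef
        have hT : ((k : LaurentSeries ℂ) + 1) * ξk * (h ^ n1 * h * Dz h * w) = 0 := by
          linear_combination (w * w * w ^ n1 * a0) * e1
            - ((n1 : LaurentSeries ℂ) * w * w * w ^ n1 * a1) * e0
            - (((k : LaurentSeries ℂ) + 1) * ξk * (a0 * w * w)) * dfa1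
            + (((k : LaurentSeries ℂ) + 1) * ξk * (a0 * w * a1)) * dp
            + (((k : LaurentSeries ℂ) + 1) * ξk *
                ((n1 : LaurentSeries ℂ) * w * (a0 * Dz w + Dz a0 * w))) * fa1
            + (((k : LaurentSeries ℂ) + 1) * ξk *
                ((n1 : LaurentSeries ℂ) * h ^ n1 * h * w)) * dfa0
            - (((k : LaurentSeries ℂ) + 1) * ξk *
                (((n1 : LaurentSeries ℂ) + 1) * h ^ n1 * Dz h * w)) * fa0
        have hkne : ((k : LaurentSeries ℂ) + 1) ≠ 0 := by
          have : ((k + 1 : ℕ) : LaurentSeries ℂ) ≠ 0 := Nat.cast_ne_zero.mpr (Nat.succ_ne_zero k)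
          push_cast at this
          exact this
        have hne : ((k : LaurentSeries ℂ) + 1) * ξk * (h ^ n1 * h * Dz h * w) ≠ 0 :=
          mul_ne_zero (mul_ne_zero hkne hξ)
            (mul_ne_zero (mul_ne_zero (mul_ne_zero (pow_ne_zero _ hhne) hhne) hder) hwne)
        exact hne hT
  obtain ⟨k, hk⟩ := hDdiff
  exact key k D hk (hcomm 0 h0S) (hcomm 1 h1S)
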